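/- A function f : X → Y from a locally connected strong Fréchet space X to a Hausdorff space Y is continuous if and only if f is compact-preserving and has the Darboux property (i.e., images of connected subsets are connected). -/

import Mathlib

open Filter Topology Set

def CompactPreserving {X Y : Type*} [TopologicalSpace X] [TopologicalSpace Y]
    (f : X → Y) : Prop := ∀ K : Set X, IsCompact K → IsCompact (f '' K)

def StrongFrechet (X : Type*) [TopologicalSpace X] : Prop :=
  ∀ (A : ℕ → Set X), (∀ n, A (n + 1) ⊆ A n) → ∀ a : X, (∀ n, a ∈ closure (A n)) →
    ∃ u : ℕ → X, (∀ n, u n ∈ A n) ∧ Filter.Tendsto u Filter.atTop (𝓝 a)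

section Aux

variable {X Y : Type*} [TopologicalSpace X] [TopologicalSpace Y]

/-- A cluster point of a sequence with values in a closed set lies in that set. -/
lemma clusterPt_mem_of_closed {c : Y} {v : ℕ → Y} {S : Set Y} (hS : IsClosed S)
    (hv : ∀ n, v n ∈ S) (hc : ClusterPt c (Filter.map v atTop)) : c ∈ S := by
  have hle : Filter.map v atTop ≤ 𝓟 S :=
    le_principal_iff.2 (Filter.mem_map.2 (Filter.univ_mem' hv))
  have h2 : ClusterPt c (𝓟 S) := hc.mono hle
  have := mem_closure_iff_clusterPt.2 h2
  rwa [hS.closure_eq] at this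

/-- Key dichotomy from compact-preservation: a sequence converging to `x` has an image
cluster point that is either `f x` or a value attained infinitely often. -/
lemma cluster_dichotomy [T2Space Y] {f : X → Y} (hcp : CompactPreserving f)
    {u : ℕ → X} {x : X} (hu : Tendsto u atTop (𝓝 x)) :
    ∃ c, ClusterPt c (Filter.map (f ∘ u) atTop) ∧
      (c = f x ∨ {n | f (u n) = c}.Infinite) := by
  have hK : IsCompact (insert x (Set.range u)) := hu.isCompact_insert_range
  have hfK : IsCompact (f '' insert x (Set.range u)) := hcp _ hK
  have hle : Filter.map (f ∘ u) atTop ≤ 𝓟 (f '' insert x (Set.range u)) :=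
    le_principal_iff.2 (Filter.mem_map.2 (Filter.univ_mem' fun n =>
      ⟨u n, Or.inr ⟨n, rfl⟩, rfl⟩))
  obtain ⟨c, -, hc⟩ := hfK.exists_clusterPt hle
  refine ⟨c, hc, ?_⟩
  by_contra hcon
  push_neg at hcon
  obtain ⟨hne, hfin⟩ := hcon
  obtain ⟨N, hN⟩ := hfin.bddAbove
  set u' : ℕ → X := fun k => u (k + (N + 1)) with hu'def
  have hu' : Tendsto u' atTop (𝓝 x) := hu.comp (tendsto_add_atTop_nat (N + 1))
  have hmapeq : Filter.map (f ∘ u') atTop = Filter.map (f ∘ u) atTop := by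
    have h1 : (f ∘ u') = (f ∘ u) ∘ (fun k => k + (N + 1)) := rfl
    rw [h1, ← Filter.map_map, Filter.map_add_atTop_eq_nat]
  have hc' : ClusterPt c (Filter.map (f ∘ u') atTop) := by rw [hmapeq]; exact hc
  have hK' : IsCompact (f '' insert x (Set.range u')) :=
    hcp _ hu'.isCompact_insert_range
  have hcmem : c ∈ f '' insert x (Set.range u') := by
    have hle' : Filter.map (f ∘ u') atTop ≤ 𝓟 (f '' insert x (Set.range u')) :=
      le_principal_iff.2 (Filter.mem_map.2 (Filter.univ_mem' fun n =>
        ⟨u' n, Or.inr ⟨n, rfl⟩, rfl⟩))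
    have h3 : c ∈ closure (f '' insert x (Set.range u')) :=
      mem_closure_iff_clusterPt.2 (hc'.mono hle')
    rwa [hK'.isClosed.closure_eq] at h3
  obtain ⟨w, hw, hwc⟩ := hcmem
  rcases hw with rfl | ⟨k, rfl⟩
  · exact hne hwc.symm
  · have : k + (N + 1) ∈ {n | f (u n) = c} := hwc
    have := hN this
    omega

/-- If `f (u n) = c` for infinitely many `n` and `u → x`, then `x` is in the closure
of the fiber of `c`. -/
lemma mem_closure_of_fiber {f : X → Y} {u : ℕ → X} {x : X}
    (hu : Tendsto u atTop (𝓝 x)) {c : Y} (hinf : {n | f (u n) = c}.Infinite) :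
    x ∈ closure (f ⁻¹' {c}) := by
  rw [mem_closure_iff_nhds]
  intro N hN
  have hev : ∀ᶠ n in atTop, u n ∈ N := hu hN
  obtain ⟨m, hm⟩ := eventually_atTop.1 hev
  obtain ⟨n, hn, hmn⟩ := hinf.exists_gt m
  exact ⟨u n, hm n hmn.le, hn⟩

/-- The connectedness step: if `f x ∈ U` and `E` is a nonempty finite set of values,
each outside `closure U` and each with `x` in the closure of its fiber, then `x` is in
the closure of the preimage of `(closure U)ᶜ \ E`. -/
lemma step_lemma [LocallyConnectedSpace X] [T1Space Y] {f : X → Y}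
    (hdx : ∀ C : Set X, IsConnected C → IsConnected (f '' C))
    {x : X} {U : Set Y} (hU : IsOpen U) (hfx : f x ∈ U)
    {E : Set Y} (hEfin : E.Finite) (hEne : E.Nonempty)
    (hE : ∀ y ∈ E, y ∉ closure U ∧ x ∈ closure (f ⁻¹' {y})) :
    x ∈ closure (f ⁻¹' ((closure U)ᶜ \ E)) := by
  by_contra hcon
  rw [mem_closure_iff_nhds] at hcon
  push_neg at hcon
  obtain ⟨N, hN, hNempty⟩ := hcon
  obtain ⟨W, ⟨hWo, hxW, hWc⟩, hWN⟩ :=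
    (LocallyConnectedSpace.open_connected_basis x).mem_iff.1 hN
  have hTc : IsConnected (f '' W) := hdx W hWc
  have hWnhds : W ∈ 𝓝 x := hWo.mem_nhds hxW
  -- f '' W ⊆ closure U ∪ E
  have hsub : f '' W ⊆ closure U ∪ E := by
    rintro t ⟨w, hwW, rfl⟩
    by_contra ht
    rw [Set.mem_union, not_or] at ht
    have : w ∈ N ∩ f ⁻¹' ((closure U)ᶜ \ E) := ⟨hWN hwW, ht.1, ht.2⟩
    rw [hNempty] at this
    exact this
  obtain ⟨y₀, hy₀E⟩ := hEne
  have hy₀T : y₀ ∈ f '' W := by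
    obtain ⟨w, hw1, hw2⟩ := mem_closure_iff_nhds.1 (hE y₀ hy₀E).2 W hWnhds
    exact ⟨w, hw1, hw2⟩
  -- apply preconnectedness to opens (closure U)ᶜ and Eᶜ
  have hclosedE : IsClosed E := hEfin.isClosed
  have := hTc.isPreconnected (closure U)ᶜ Eᶜ
    (isClosed_closure.isOpen_compl) hclosedE.isOpen_compl
    (by
      intro t htT
      by_cases h : t ∈ closure U
      · exact Or.inr fun hE' => (hE t hE').1 h
      · exact Or.inl h)
    ⟨y₀, hy₀T, (hE y₀ hy₀E).1⟩
    ⟨f x, ⟨x, hxW, rfl⟩, fun hfxE => (hE (f x) hfxE).1 (subset_closure hfx)⟩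
  obtain ⟨t, htT, ht1, ht2⟩ := this
  obtain ⟨w, hwW, rfl⟩ := htT
  have : w ∈ N ∩ f ⁻¹' ((closure U)ᶜ \ E) := ⟨hWN hwW, ht1, ht2⟩
  rw [hNempty] at this
  exact this

end Aux

theorem stmt3 {X Y : Type*} [TopologicalSpace X] [TopologicalSpace Y]
    [LocallyConnectedSpace X] [T2Space Y] (hX : StrongFrechet X) (f : X → Y) :
    Continuous f ↔
      (CompactPreserving f ∧ ∀ C : Set X, IsConnected C → IsConnected (f '' C)) := by
  constructor
  · intro hf
    exact ⟨fun K hK => hK.image hf, fun C hC => hC.image f hf.continuousOn⟩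
  · rintro ⟨hcp, hdx⟩
    classical
    rw [continuous_iff_continuousAt]
    intro x
    by_contra hx
    -- extract an open V around f x whose preimage is not a neighborhood of x
    obtain ⟨V, hVo, hfxV, hVn⟩ : ∃ V, IsOpen V ∧ f x ∈ V ∧ f ⁻¹' V ∉ 𝓝 x := by
      rw [ContinuousAt] at hx
      rw [Filter.tendsto_iff_eventually] at hx
      push_neg at hx
      obtain ⟨p, hp, hnp⟩ := hx
      obtain ⟨V, hVsub, hVo, hfxV⟩ := mem_nhds_iff.1 hp
      refine ⟨V, hVo, hfxV, fun hmem => hnp ?_⟩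
      filter_upwards [hmem] with z hz using not_not.2 (hVsub hz)
    have hxclV : x ∈ closure (f ⁻¹' Vᶜ) := by
      rw [mem_closure_iff_nhds]
      intro N hN
      rcases Set.eq_empty_or_nonempty (N ∩ f ⁻¹' Vᶜ) with h | h
      · exfalso
        apply hVn
        filter_upwards [hN] with z hz
        by_contra hzV
        exact Set.eq_empty_iff_forall_notMem.1 h z ⟨hz, hzV⟩
      · exact h
    -- first constant value y₁
    obtain ⟨z, hzA, hzt⟩ := hX (fun _ => f ⁻¹' Vᶜ) (fun _ => subset_rfl) x (fun _ => hxclV)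
    obtain ⟨c₁, hc₁c, hc₁or⟩ := cluster_dichotomy hcp hzt
    have hc₁V : c₁ ∈ Vᶜ :=
      clusterPt_mem_of_closed hVo.isClosed_compl (fun n => hzA n) hc₁c
    have hc₁ne : c₁ ≠ f x := fun h => hc₁V (h ▸ hfxV)
    have hinf₁ := hc₁or.resolve_left hc₁ne
    have hy₁cl : x ∈ closure (f ⁻¹' {c₁}) := mem_closure_of_fiber hzt hinf₁
    obtain ⟨U₁, O₁, hU₁o, hO₁o, hfxU₁, hc₁O₁, hdisj⟩ := t2_separation hc₁ne.symm
    have hy₁U : c₁ ∉ closure U₁ := by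
      rw [mem_closure_iff]
      push_neg
      exact ⟨O₁, hO₁o, hc₁O₁, by
        rw [Set.eq_empty_iff_forall_notMem]
        exact fun t ⟨h1, h2⟩ => Set.disjoint_left.1 hdisj h2 h1⟩
    have hfx_not : f x ∉ closure ((closure U₁)ᶜ) := by
      rw [mem_closure_iff]
      push_neg
      refine ⟨U₁, hU₁o, hfxU₁, ?_⟩
      rw [Set.eq_empty_iff_forall_notMem]
      exact fun t ⟨h1, h2⟩ => h2 (subset_closure h1)
    set P : Y → Prop := fun c => c ∉ closure U₁ ∧ x ∈ closure (f ⁻¹' {c}) with hPdef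
    have hy₁P : P c₁ := ⟨hy₁U, hy₁cl⟩
    -- step: from any finite nonempty set of good values, produce a new one
    have hstep : ∀ E : Finset Y, E.Nonempty → (∀ y ∈ E, P y) → ∃ c, P c ∧ c ∉ E := by
      intro E hEne hPE
      have hcl : x ∈ closure (f ⁻¹' ((closure U₁)ᶜ \ (E : Set Y))) :=
        step_lemma hdx hU₁o hfxU₁ E.finite_toSet
          (by exact_mod_cast hEne) (fun y hy => hPE y (by exact_mod_cast hy))
      obtain ⟨w, hwA, hwt⟩ :=
        hX (fun _ => f ⁻¹' ((closure U₁)ᶜ \ (E : Set Y))) (fun _ => subset_rfl) x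
          (fun _ => hcl)
      obtain ⟨c, hcc, hcor⟩ := cluster_dichotomy hcp hwt
      have hcmem : c ∈ closure ((closure U₁)ᶜ) :=
        clusterPt_mem_of_closed isClosed_closure
          (fun n => subset_closure (hwA n).1) hcc
      have hcne : c ≠ f x := fun h => hfx_not (h ▸ hcmem)
      have hinf := hcor.resolve_left hcne
      obtain ⟨n₀, hn₀⟩ := hinf.nonempty
      refine ⟨c, ⟨?_, mem_closure_of_fiber hwt hinf⟩, ?_⟩
      · rw [← hn₀]; exact (hwA n₀).1
      · intro hcE
        exact (hwA n₀).2 (by rw [hn₀]; exact_mod_cast hcE)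
    choose nxt hnxtP hnxtE using hstep
    -- build the sequence of distinct good values
    let T := {E : Finset Y // E.Nonempty ∧ ∀ y ∈ E, P y}
    let G : ℕ → T := fun n => Nat.rec
      (⟨{c₁}, ⟨c₁, Finset.mem_singleton_self c₁⟩,
        fun y hy => by rw [Finset.mem_singleton] at hy; rw [hy]; exact hy₁P⟩ : T)
      (fun _ p => ⟨insert (nxt p.1 p.2.1 p.2.2) p.1,
        ⟨_, Finset.mem_insert_self _ _⟩,
        fun y hy => by
          rcases Finset.mem_insert.1 hy with h | h
          · rw [h]; exact hnxtP p.1 p.2.1 p.2.2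
          · exact p.2.2 y h⟩) n
    let g : ℕ → Y := fun n => nxt (G n).1 (G n).2.1 (G n).2.2
    have hGsucc : ∀ n, (G (n + 1)).1 = insert (g n) (G n).1 := fun n => rfl
    have hGmono : ∀ m n, m ≤ n → (G m).1 ⊆ (G n).1 := by
      intro m n hmn
      induction n with
      | zero => rw [Nat.le_zero.1 hmn]
      | succ k ih =>
        rcases Nat.lt_or_ge m (k + 1) with h | h
        · intro y hy
          rw [hGsucc k]
          exact Finset.mem_insert_of_mem (ih (Nat.lt_succ_iff.1 h) hy)
        · rw [Nat.le_antisymm hmn h]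
    have hgP : ∀ n, P (g n) := fun n => hnxtP (G n).1 (G n).2.1 (G n).2.2
    have hginj : ∀ m n, m < n → g m ≠ g n := by
      intro m n hmn heq
      have h1 : g m ∈ (G (m + 1)).1 := by
        rw [hGsucc m]; exact Finset.mem_insert_self _ _
      have h2 : g m ∈ (G n).1 := hGmono (m + 1) n hmn h1
      rw [heq] at h2
      exact hnxtE (G n).1 (G n).2.1 (G n).2.2 h2
    -- final diagonal argument
    have hdec : ∀ n, f ⁻¹' (g '' Set.Ici (n + 1)) ⊆ f ⁻¹' (g '' Set.Ici n) :=
      fun n => Set.preimage_mono (Set.image_mono (Set.Ici_subset_Ici.2 (Nat.le_succ n)))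
    have hxcl' : ∀ n, x ∈ closure (f ⁻¹' (g '' Set.Ici n)) := by
      intro n
      apply closure_mono (Set.preimage_mono (s := {g n}) ?_) (hgP n).2
      exact Set.singleton_subset_iff.2 ⟨n, Set.self_mem_Ici, rfl⟩
    obtain ⟨u, huA, hut⟩ := hX (fun n => f ⁻¹' (g '' Set.Ici n)) hdec x hxcl'
    obtain ⟨c, hcc, hcor⟩ := cluster_dichotomy hcp hut
    have hcmem : c ∈ closure ((closure U₁)ᶜ) := by
      refine clusterPt_mem_of_closed isClosed_closure (fun n => ?_) hcc
      obtain ⟨i, -, hi⟩ := huA n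
      show f (u n) ∈ closure ((closure U₁)ᶜ)
      rw [← hi]
      exact subset_closure (hgP i).1
    have hcne : c ≠ f x := fun h => hfx_not (h ▸ hcmem)
    have hinf := hcor.resolve_left hcne
    obtain ⟨n₀, hn₀⟩ := hinf.nonempty
    obtain ⟨i₀, hi₀ge, hi₀⟩ := huA n₀
    obtain ⟨n₁, hn₁, hn₁gt⟩ := hinf.exists_gt i₀
    obtain ⟨i₁, hi₁ge, hi₁⟩ := huA n₁
    have hii : i₀ < i₁ := lt_of_lt_of_le hn₁gt hi₁ge
    exact hginj i₀ i₁ hii (by rw [hi₀, hi₁, hn₀, hn₁])
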